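/- Given positive reals s₁, s₂, s₃, s₄ and the weights ω_k defined as ω₁ = √(s₂s₃s₄)/((√s₁+√s₃)(√(s₁s₃)+√(s₂s₄))), ω₂ = √(s₁s₃s₄)/((√s₂+√s₄)(√(s₁s₃)+√(s₂s₄))), ω₃ = √(s₁s₂s₄)/((√s₁+√s₃)(√(s₁s₃)+√(s₂s₄))), ω₄ = √(s₁s₂s₃)/((√s₂+√s₄)(√(s₁s₃)+√(s₂s₄))), the second-moment matching condition ω₁ s₁ - ω₂ s₂ + ω₃ s₃ - ω₄ s₄ = 0 holds. -/
import Mathlib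

lemma key (a b c d : ℝ) (ha : 0 < a) (hb : 0 < b) (hc : 0 < c) (hd : 0 < d) :
    (b*c*d) / ((a+c)*(a*c+b*d)) * a^2 - (a*c*d) / ((b+d)*(a*c+b*d)) * b^2
      + (a*b*d) / ((a+c)*(a*c+b*d)) * c^2 - (a*b*c) / ((b+d)*(a*c+b*d)) * d^2 = 0 := by
  have h1 : (a+c) ≠ 0 := by positivity
  have h2 : (b+d) ≠ 0 := by positivity
  have h3 : (a*c+b*d) ≠ 0 := by positivity
  field_simp
  ring

theorem stmt3 (s₁ s₂ s₃ s₄ : ℝ) (h₁ : 0 < s₁) (h₂ : 0 < s₂) (h₃ : 0 < s₃) (h₄ : 0 < s₄)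
    (ω₁ ω₂ ω₃ ω₄ : ℝ)
    (hω₁ : ω₁ = Real.sqrt (s₂*s₃*s₄) / ((Real.sqrt s₁ + Real.sqrt s₃) * (Real.sqrt (s₁*s₃) + Real.sqrt (s₂*s₄))))
    (hω₂ : ω₂ = Real.sqrt (s₁*s₃*s₄) / ((Real.sqrt s₂ + Real.sqrt s₄) * (Real.sqrt (s₁*s₃) + Real.sqrt (s₂*s₄))))
    (hω₃ : ω₃ = Real.sqrt (s₁*s₂*s₄) / ((Real.sqrt s₁ + Real.sqrt s₃) * (Real.sqrt (s₁*s₃) + Real.sqrt (s₂*s₄))))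
    (hω₄ : ω₄ = Real.sqrt (s₁*s₂*s₃) / ((Real.sqrt s₂ + Real.sqrt s₄) * (Real.sqrt (s₁*s₃) + Real.sqrt (s₂*s₄)))) :
    ω₁ * s₁ - ω₂ * s₂ + ω₃ * s₃ - ω₄ * s₄ = 0 := by
  set a := Real.sqrt s₁ with ha'
  set b := Real.sqrt s₂ with hb'
  set c := Real.sqrt s₃ with hc'
  set d := Real.sqrt s₄ with hd'
  have ha : 0 < a := Real.sqrt_pos.mpr h₁
  have hb : 0 < b := Real.sqrt_pos.mpr h₂
  have hc : 0 < c := Real.sqrt_pos.mpr h₃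
  have hd : 0 < d := Real.sqrt_pos.mpr h₄
  have e₁ : s₁ = a^2 := (Real.sq_sqrt h₁.le).symm
  have e₂ : s₂ = b^2 := (Real.sq_sqrt h₂.le).symm
  have e₃ : s₃ = c^2 := (Real.sq_sqrt h₃.le).symm
  have e₄ : s₄ = d^2 := (Real.sq_sqrt h₄.le).symm
  have m13 : Real.sqrt (s₁*s₃) = a*c := by rw [Real.sqrt_mul h₁.le]
  have m24 : Real.sqrt (s₂*s₄) = b*d := by rw [Real.sqrt_mul h₂.le]
  have m234 : Real.sqrt (s₂*s₃*s₄) = b*c*d := by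
    rw [Real.sqrt_mul (by positivity), Real.sqrt_mul h₂.le]
  have m134 : Real.sqrt (s₁*s₃*s₄) = a*c*d := by
    rw [Real.sqrt_mul (by positivity), Real.sqrt_mul h₁.le]
  have m124 : Real.sqrt (s₁*s₂*s₄) = a*b*d := by
    rw [Real.sqrt_mul (by positivity), Real.sqrt_mul h₁.le]
  have m123 : Real.sqrt (s₁*s₂*s₃) = a*b*c := by
    rw [Real.sqrt_mul (by positivity), Real.sqrt_mul h₁.le]
  rw [hω₁, hω₂, hω₃, hω₄, m13, m24, m234, m134, m124, m123, e₁, e₂, e₃, e₄]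
  exact key a b c d ha hb hc hd
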